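/- arXiv:2504.03086 — 2 statements merged into one kernel-verified Lean document; each statement's English description precedes it below -/
import Mathlib

section
/- The (2,3,7) triangle group T(2,3,7) = ⟨x, y, z ∣ x² = y³ = z⁷ = xyz = 1⟩ does not split as a free product of two nontrivial groups: if A and B are groups and T(2,3,7) is isomorphic to the free product A ∗ B, then A is trivial or B is trivial. -/
open Monoid in
/-- The relators of the (2,3,7) triangle group
`T(2,3,7) = ⟨x, y, z ∣ x² = y³ = z⁷ = xyz = 1⟩`. -/
def T237Rels : Set (FreeGroup (Fin 3)) :=
  {FreeGroup.of 0 ^ 2, FreeGroup.of 1 ^ 3, FreeGroup.of 2 ^ 7,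
    FreeGroup.of 0 * FreeGroup.of 1 * FreeGroup.of 2}

/-- The (2,3,7) triangle group as a presented group. -/
abbrev T237 : Type := PresentedGroup T237Rels

section AuxFreeProductTorsion

open Monoid CoprodI

variable {ι : Type*} {M : ι → Type*} [∀ i, Group (M i)]

lemma NeWord_prod_ne_one [DecidableEq ι] [∀ i, DecidableEq (M i)]
    {i j : ι} (w : Monoid.CoprodI.NeWord M i j) : w.prod ≠ 1 := by
  intro h
  have h1 : (Word.equiv (M := M)).symm w.toWord = Word.equiv.symm Word.empty := by
    show w.toWord.prod = Word.empty.prod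
    simpa [NeWord.prod] using h
  have h2 := (Word.equiv (M := M)).symm.injective h1
  exact w.toList_ne_nil (by rw [show w.toList = w.toWord.toList from rfl, h2]; rfl)

lemma NeWord_pow {i j : ι} (hij : i ≠ j) (w : Monoid.CoprodI.NeWord M i j) (n : ℕ) :
    ∃ v : Monoid.CoprodI.NeWord M i j, v.prod = w.prod ^ (n + 1) := by
  induction n with
  | zero => exact ⟨w, by simp⟩
  | succ k ih =>
    obtain ⟨v, hv⟩ := ih
    exact ⟨v.append (Ne.symm hij) w, by rw [NeWord.append_prod, hv, ← pow_succ]⟩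

lemma torsion_conj [DecidableEq ι] [∀ i, DecidableEq (M i)] (n : ℕ) (hn : n ≠ 0) :
    ∀ L : ℕ, ∀ g : CoprodI M, (Word.equiv g).toList.length = L → g ^ n = 1 →
      g = 1 ∨ ∃ (u : CoprodI M) (i : ι) (x : M i), g = u * of x * u⁻¹ := by
  intro L
  induction L using Nat.strong_induction_on with
  | _ L ih =>
  intro g hL hgn
  have hg : Word.prod (Word.equiv g) = g := Word.equiv.symm_apply_apply g
  by_cases hw : Word.equiv g = Word.empty
  · left; rw [← hg, hw, Word.prod_empty]
  obtain ⟨i, j, w', hw'⟩ := NeWord.of_word _ hw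
  have hprod : w'.prod = g := by rw [NeWord.prod, hw', hg]
  rcases eq_or_ne i j with rfl | hij
  swap
  · exfalso
    obtain ⟨m, rfl⟩ := Nat.exists_eq_succ_of_ne_zero hn
    obtain ⟨v, hv⟩ := NeWord_pow hij w' m
    exact NeWord_prod_ne_one v (by rw [hv, hprod, hgn])
  -- now i = j
  have hne_one : ∀ l ∈ w'.toList, l.2 ≠ 1 := w'.toWord.ne_one
  have hchain : List.Chain' (fun a b : (Σ k, M k) => a.1 ≠ b.1) w'.toList := w'.toWord.chain_ne
  have hhead : w'.toList.head? = some ⟨i, w'.head⟩ := w'.toList_head?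
  have hlast : w'.toList.getLast? = some ⟨i, w'.last⟩ := w'.toList_getLast?
  have hLlen : w'.toList.length = L := by rw [show w'.toList = w'.toWord.toList from rfl, hw', hL]
  set hd := w'.head with hhd
  set y := w'.last with hy
  obtain ⟨t, hcons⟩ : ∃ t, w'.toList = ⟨i, hd⟩ :: t := by
    cases hl : w'.toList with
    | nil => exact absurd hl w'.toList_ne_nil
    | cons a t => rw [hl] at hhead; exact ⟨t, by simp_all⟩
  by_cases ht : t = []
  · -- singleton word: g = of hd
    right
    refine ⟨1, i, hd, ?_⟩
    have : g = CoprodI.of hd := by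
      rw [← hprod, NeWord.prod, Word.prod,
        show w'.toWord.toList = w'.toList from rfl, hcons, ht]
      simp
    simp [this]
  -- length ≥ 2 case
  have htlast : t.getLast ht = ⟨i, y⟩ := by
    have h1 : w'.toList.getLast? = some (t.getLast ht) := by
      rw [hcons, List.getLast?_eq_getLast (by simp), List.getLast_cons ht]
    rw [hlast] at h1
    exact (Option.some_injective _ h1).symm
  set P := t.dropLast with hP
  have htP : t = P ++ [⟨i, y⟩] := by
    rw [hP, ← htlast]; exact (List.dropLast_append_getLast ht).symm
  have hlistP : w'.toList = ⟨i, hd⟩ :: (P ++ [⟨i, y⟩]) := by rw [hcons, htP]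
  -- P is nonempty
  have hPne : P ≠ [] := by
    intro h0
    rw [hlistP, h0] at hchain
    simp [List.Chain'] at hchain
  -- chain facts
  have hchain2 : List.Chain' (fun a b : (Σ k, M k) => a.1 ≠ b.1) (P ++ [⟨i, y⟩]) := by
    rw [hlistP] at hchain; exact hchain.tail
  have hchainP : List.Chain' (fun a b : (Σ k, M k) => a.1 ≠ b.1) P :=
    (List.isChain_append.mp hchain2).1
  have hPlast : ∀ l ∈ P.getLast?, l.1 ≠ i := by
    intro l hl
    have := (List.isChain_append.mp hchain2).2.2 l hl ⟨i, y⟩ rfl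
    exact this
  -- the product decomposition
  set f : (Σ k, M k) → CoprodI M := fun l => CoprodI.of l.2 with hf
  have hgprod : g = CoprodI.of hd * ((P.map f).prod * CoprodI.of y) := by
    rw [← hprod, NeWord.prod, Word.prod,
      show w'.toWord.toList = w'.toList from rfl, hlistP]
    simp [hf, mul_assoc]
  set c : CoprodI M := (CoprodI.of hd)⁻¹ * g * CoprodI.of hd with hc
  have hcval : c = (P.map f).prod * CoprodI.of (y * hd) := by
    rw [hc, hgprod]
    rw [MonoidHom.map_mul]
    group
  have hcn : c ^ n = 1 := by
    have : c = (CoprodI.of hd)⁻¹ * g * ((CoprodI.of hd)⁻¹)⁻¹ := by rw [hc, inv_inv]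
    rw [this, conj_pow, hgn, mul_one]
    group
  have hgc : g = CoprodI.of hd * c * (CoprodI.of hd)⁻¹ := by rw [hc]; group
  -- build the word for c
  have hcsmall : ∃ w2 : Word M, c = w2.prod ∧ w2.toList.length < L := by
    by_cases hyh : y * hd = 1
    · refine ⟨⟨P, ?_, hchainP⟩, ?_, ?_⟩
      · intro l hl; exact hne_one l (by rw [hlistP]; simp [hl])
      · rw [hcval, hyh]; simp [Word.prod, hf]
      · have : L = P.length + 2 := by rw [← hLlen, hlistP]; simp
        show P.length < L
        omega
    · refine ⟨⟨P ++ [⟨i, y * hd⟩], ?_, ?_⟩, ?_, ?_⟩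
      · intro l hl
        rcases List.mem_append.mp hl with h1 | h1
        · exact hne_one l (by rw [hlistP]; simp [h1])
        · simp at h1; subst h1; exact hyh
      · rw [List.isChain_append]
        refine ⟨hchainP, List.isChain_singleton _, ?_⟩
        intro a ha b hb
        simp at hb; subst hb
        exact hPlast a ha
      · rw [hcval, Word.prod]
        simp [hf]
      · have : L = P.length + 2 := by rw [← hLlen, hlistP]; simp
        show (P ++ [(⟨i, y * hd⟩ : Σ k, M k)]).length < L
        simp; omega
  obtain ⟨w2, hcw2, hlen⟩ := hcsmall
  have hequiv : Word.equiv c = w2 := by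
    have e1 : (Word.equiv (M := M)).symm w2 = w2.prod := rfl
    rw [hcw2, ← e1, Equiv.apply_symm_apply]
  rcases ih w2.toList.length (by omega) c (by rw [hequiv]) hcn with h1 | ⟨u, k, x, h1⟩
  · left; rw [hgc, h1]; group
  · right
    refine ⟨CoprodI.of hd * u, k, x, ?_⟩
    rw [hgc, h1]
    group

section CoprodTransfer

universe u v
variable (A : Type u) (B : Type v) [Group A] [Group B]

private def fam : Bool → Type (max u v) := fun b => cond b (ULift.{v} A) (ULift.{u} B)

instance famGroup : ∀ b, Group (fam A B b) := fun b => by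
  cases b
  · exact inferInstanceAs (Group (ULift B))
  · exact inferInstanceAs (Group (ULift A))

private def phi : CoprodI (fam A B) →* Coprod A B :=
  CoprodI.lift (fun b => match b with
    | true => Coprod.inl.comp (MulEquiv.ulift : ULift.{v} A ≃* A).toMonoidHom
    | false => Coprod.inr.comp (MulEquiv.ulift : ULift.{u} B ≃* B).toMonoidHom)

private def psi : Coprod A B →* CoprodI (fam A B) :=
  Coprod.lift
    ((CoprodI.of (M := fam A B) (i := true)).comp
      (MulEquiv.ulift : ULift.{v} A ≃* A).symm.toMonoidHom)
    ((CoprodI.of (M := fam A B) (i := false)).comp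
      (MulEquiv.ulift : ULift.{u} B ≃* B).symm.toMonoidHom)

private lemma phi_psi (g : Coprod A B) : phi A B (psi A B g) = g := by
  have : (phi A B).comp (psi A B) = MonoidHom.id _ := by
    apply Coprod.hom_ext <;> ext x <;>
      simp only [MonoidHom.comp_apply, MonoidHom.id_apply, MonoidHom.coe_comp,
        Function.comp_apply, psi, Coprod.lift_apply_inl, Coprod.lift_apply_inr,
        phi, CoprodI.lift_of] <;> rfl
  calc phi A B (psi A B g) = ((phi A B).comp (psi A B)) g := rfl
    _ = g := by rw [this]; rfl

lemma coprod_torsion (g : Coprod A B) (n : ℕ) (hn : n ≠ 0) (h : g ^ n = 1) :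
    (∃ (u : Coprod A B) (a : A), g = u * Coprod.inl a * u⁻¹) ∨
      (∃ (u : Coprod A B) (b : B), g = u * Coprod.inr b * u⁻¹) := by
  classical
  have hpsi : (psi A B g) ^ n = 1 := by rw [← map_pow, h, map_one]
  rcases torsion_conj (M := fam A B) n hn _ (psi A B g) rfl hpsi with h1 | ⟨u, i, x, h1⟩
  · left
    refine ⟨1, 1, ?_⟩
    have := phi_psi A B g
    rw [h1, map_one] at this
    simp [← this]
  · have hg : g = phi A B u * phi A B (CoprodI.of x) * (phi A B u)⁻¹ := by
      conv_lhs => rw [← phi_psi A B g, h1]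
      simp
    cases i with
    | true =>
      left
      refine ⟨phi A B u, (MulEquiv.ulift : ULift.{v} A ≃* A) x, ?_⟩
      rw [hg]
      congr 1
    | false =>
      right
      refine ⟨phi A B u, (MulEquiv.ulift : ULift.{u} B ≃* B) x, ?_⟩
      rw [hg]
      congr 1

end CoprodTransfer

lemma trivial_of_kill {G C : Type*} [Group G] [Group C] (f : G →* C)
    (hsur : Function.Surjective f) (S : Set G) (hS : Subgroup.closure S = ⊤)
    (h : ∀ g ∈ S, f g = 1) : ∀ c : C, c = 1 := by
  intro c
  obtain ⟨g, rfl⟩ := hsur c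
  have hg : g ∈ Subgroup.closure S := by rw [hS]; trivial
  induction hg using Subgroup.closure_induction with
  | mem g hgS => exact h g hgS
  | one => exact map_one f
  | mul a b _ _ ha hb => rw [map_mul, ha, hb, mul_one]
  | inv a _ ha => rw [map_inv, ha, inv_one]

end AuxFreeProductTorsion

open Monoid in
/-- The triangle group `T(2,3,7)` does not split as a free product of two
nontrivial groups: if `T(2,3,7) ≃* A ∗ B` then `A` or `B` is trivial. -/
theorem T237_not_free_product (A B : Type*) [Group A] [Group B]
    (e : T237 ≃* Coprod A B) :
    (∀ a : A, a = 1) ∨ (∀ b : B, b = 1) := by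
  classical
  set x : Coprod A B := e (PresentedGroup.of 0) with hxdef
  set y : Coprod A B := e (PresentedGroup.of 1) with hydef
  set z : Coprod A B := e (PresentedGroup.of 2) with hzdef
  have key : ∀ w ∈ T237Rels, (PresentedGroup.mk T237Rels w) = 1 := fun w hw =>
    (QuotientGroup.eq_one_iff _).mpr (Subgroup.subset_normalClosure hw)
  have hx2 : x ^ 2 = 1 := by
    rw [hxdef, ← map_pow, ← map_one e]
    congr 1
    have := key _ (show FreeGroup.of 0 ^ 2 ∈ T237Rels by simp [T237Rels])
    rw [map_pow] at this
    exact this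
  have hy3 : y ^ 3 = 1 := by
    rw [hydef, ← map_pow, ← map_one e]
    congr 1
    have := key _ (show FreeGroup.of 1 ^ 3 ∈ T237Rels by simp [T237Rels])
    rw [map_pow] at this
    exact this
  have hz7 : z ^ 7 = 1 := by
    rw [hzdef, ← map_pow, ← map_one e]
    congr 1
    have := key _ (show FreeGroup.of 2 ^ 7 ∈ T237Rels by simp [T237Rels])
    rw [map_pow] at this
    exact this
  have hxyz : x * y * z = 1 := by
    rw [hxdef, hydef, hzdef, ← map_mul, ← map_mul, ← map_one e]
    congr 1
    have := key _ (show FreeGroup.of 0 * FreeGroup.of 1 * FreeGroup.of 2 ∈ T237Rels by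
      simp [T237Rels])
    rw [map_mul, map_mul] at this
    exact this
  -- generation
  have hgen : Subgroup.closure ({x, y, z} : Set (Coprod A B)) = ⊤ := by
    have h1 : Subgroup.closure (Set.range (PresentedGroup.of : Fin 3 → T237)) = ⊤ :=
      PresentedGroup.closure_range_of _
    have h2 : Set.range (⇑e.toMonoidHom ∘ (PresentedGroup.of : Fin 3 → T237))
        = {x, y, z} := by
      ext w
      simp only [Set.mem_range, Function.comp_apply, Set.mem_insert_iff,
        Set.mem_singleton_iff]
      constructor
      · rintro ⟨i, rfl⟩
        fin_cases i
        · left; rfl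
        · right; left; rfl
        · right; right; rfl
      · rintro (rfl | rfl | rfl)
        exacts [⟨0, rfl⟩, ⟨1, rfl⟩, ⟨2, rfl⟩]
    rw [← h2, Set.range_comp, ← MonoidHom.map_closure, h1]
    exact Subgroup.map_top_of_surjective _ e.surjective
  have hz' : z = y⁻¹ * x⁻¹ := by
    have h2 : y⁻¹ * (x⁻¹ * (x * y * z)) = y⁻¹ * (x⁻¹ * 1) := by rw [hxyz]
    simpa [mul_assoc] using h2
  have hy' : y = x⁻¹ * z⁻¹ := by
    have h2 : x⁻¹ * (x * y * z) * z⁻¹ = x⁻¹ * 1 * z⁻¹ := by rw [hxyz]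
    simpa [mul_assoc] using h2
  have hx' : x = z⁻¹ * y⁻¹ := by
    have h2 : x * y * z * z⁻¹ * y⁻¹ = 1 * z⁻¹ * y⁻¹ := by rw [hxyz]
    simpa [mul_assoc] using h2
  -- pairwise generation
  have genxy : Subgroup.closure ({x, y} : Set (Coprod A B)) = ⊤ := by
    rw [eq_top_iff, ← hgen]
    refine (Subgroup.closure_le _).mpr ?_
    rintro w (rfl | rfl | rfl)
    · exact Subgroup.subset_closure (by left; rfl)
    · exact Subgroup.subset_closure (by right; rfl)
    · rw [hz']
      exact mul_mem (inv_mem (Subgroup.subset_closure (by right; rfl)))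
        (inv_mem (Subgroup.subset_closure (by left; rfl)))
  have genxz : Subgroup.closure ({x, z} : Set (Coprod A B)) = ⊤ := by
    rw [eq_top_iff, ← hgen]
    refine (Subgroup.closure_le _).mpr ?_
    rintro w (rfl | rfl | rfl)
    · exact Subgroup.subset_closure (by left; rfl)
    · rw [hy']
      exact mul_mem (inv_mem (Subgroup.subset_closure (by left; rfl)))
        (inv_mem (Subgroup.subset_closure (by right; rfl)))
    · exact Subgroup.subset_closure (by right; rfl)
  have genyz : Subgroup.closure ({y, z} : Set (Coprod A B)) = ⊤ := by
    rw [eq_top_iff, ← hgen]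
    refine (Subgroup.closure_le _).mpr ?_
    rintro w (rfl | rfl | rfl)
    · rw [hx']
      exact mul_mem (inv_mem (Subgroup.subset_closure (by right; rfl)))
        (inv_mem (Subgroup.subset_closure (by left; rfl)))
    · exact Subgroup.subset_closure (by left; rfl)
    · exact Subgroup.subset_closure (by right; rfl)
  -- killing lemmas
  have killA : ∀ g1 g2 : Coprod A B, Subgroup.closure ({g1, g2} : Set (Coprod A B)) = ⊤ →
      (∃ (u : Coprod A B) (a : A), g1 = u * Coprod.inl a * u⁻¹) →
      (∃ (u : Coprod A B) (a : A), g2 = u * Coprod.inl a * u⁻¹) →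
      ∀ b : B, b = 1 := by
    rintro g1 g2 hgen12 ⟨u1, a1, h1⟩ ⟨u2, a2, h2⟩
    refine trivial_of_kill Coprod.snd Coprod.snd_surjective {g1, g2} hgen12 ?_
    rintro g (rfl | rfl)
    · rw [h1]; simp
    · rw [h2]; simp
  have killB : ∀ g1 g2 : Coprod A B, Subgroup.closure ({g1, g2} : Set (Coprod A B)) = ⊤ →
      (∃ (u : Coprod A B) (b : B), g1 = u * Coprod.inr b * u⁻¹) →
      (∃ (u : Coprod A B) (b : B), g2 = u * Coprod.inr b * u⁻¹) →
      ∀ a : A, a = 1 := by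
    rintro g1 g2 hgen12 ⟨u1, b1, h1⟩ ⟨u2, b2, h2⟩
    refine trivial_of_kill Coprod.fst Coprod.fst_surjective {g1, g2} hgen12 ?_
    rintro g (rfl | rfl)
    · rw [h1]; simp
    · rw [h2]; simp
  -- torsion
  have Tx := coprod_torsion A B x 2 (by norm_num) hx2
  have Ty := coprod_torsion A B y 3 (by norm_num) hy3
  have Tz := coprod_torsion A B z 7 (by norm_num) hz7
  rcases Tx with hxA | hxB <;> rcases Ty with hyA | hyB <;> rcases Tz with hzA | hzB
  · exact Or.inr (killA x y genxy hxA hyA)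
  · exact Or.inr (killA x y genxy hxA hyA)
  · exact Or.inr (killA x z genxz hxA hzA)
  · exact Or.inl (killB y z genyz hyB hzB)
  · exact Or.inr (killA y z genyz hyA hzA)
  · exact Or.inl (killB x z genxz hxB hzB)
  · exact Or.inl (killB x y genxy hxB hyB)
  · exact Or.inl (killB x y genxy hxB hyB)
end

section
/- Let A and B be groups and let A ∗ B denote their free product, with canonical inclusions ι_A : A → A ∗ B and ι_B : B → A ∗ B. Let a ∈ A and b ∈ B be nonidentity elements. Then every finite sequence g₀, g₁, …, g_n of elements of A ∗ B with g₀ = ι_A(a), g_n = ι_B(b), and with each consecutive ratio g_i⁻¹ · g_{i+1} lying in ι_A(A) ∪ ι_B(B), must contain the identity element; that is, g_i = 1 for some i. (Equivalently: the complement of the identity vertex in the Cayley graph of A ∗ B with respect to the generating set ι_A(A) ∪ ι_B(B) is disconnected, separating ι_A(a) from ι_B(b).) -/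
open Monoid

section Aux

variable {ι : Type*} {G : ι → Type*} [∀ i, Group (G i)]

private theorem aux_word_prod_injective [DecidableEq ι] [∀ i, DecidableEq (G i)] :
    Function.Injective (CoprodI.Word.prod : CoprodI.Word G → CoprodI G) := by
  intro w₁ w₂ h
  have h1 : CoprodI.Word.equiv.symm w₁ = CoprodI.Word.prod w₁ := rfl
  have h2 : CoprodI.Word.equiv.symm w₂ = CoprodI.Word.prod w₂ := rfl
  exact CoprodI.Word.equiv.symm.injective (by rw [h1, h2, h])

private theorem aux_firstIdx_unique {i₁ j₁ i₂ j₂ k : ι}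
    (w₁ : CoprodI.NeWord G i₁ j₁) (w₂ : CoprodI.NeWord G i₂ j₂) (x : G k)
    (h : w₂.prod = w₁.prod * CoprodI.of x) : i₁ = i₂ := by
  classical
  by_contra hne
  set u : CoprodI.NeWord G j₁ j₂ := w₁.inv.append hne w₂ with hu_def
  have hu : u.prod = CoprodI.of x := by
    rw [hu_def, CoprodI.NeWord.append_prod, CoprodI.NeWord.inv_prod, h]
    group
  have hlen : 2 ≤ u.toList.length := by
    rw [hu_def]
    simp only [CoprodI.NeWord.toList, List.length_append]
    have h1 : 0 < w₁.inv.toList.length :=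
      List.length_pos_iff.mpr w₁.inv.toList_ne_nil
    have h2 : 0 < w₂.toList.length :=
      List.length_pos_iff.mpr w₂.toList_ne_nil
    omega
  rcases eq_or_ne x 1 with hx | hx
  · have h1 : u.toWord.prod = (CoprodI.Word.empty : CoprodI.Word G).prod := by
      rw [CoprodI.Word.prod_empty, ← CoprodI.NeWord.prod, hu, hx, map_one]
    have h2 : u.toWord = CoprodI.Word.empty := aux_word_prod_injective h1
    have h3 : u.toList = ([] : List (Σ i, G i)) := congrArg CoprodI.Word.toList h2
    rw [h3] at hlen
    simp at hlen
  · have h1 : u.toWord.prod = (CoprodI.NeWord.singleton x hx).toWord.prod := by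
      rw [← CoprodI.NeWord.prod, ← CoprodI.NeWord.prod, hu,
        CoprodI.NeWord.prod_singleton]
    have h2 : u.toWord = (CoprodI.NeWord.singleton x hx).toWord :=
      aux_word_prod_injective h1
    have h3 : u.toList = [⟨k, x⟩] := congrArg CoprodI.Word.toList h2
    rw [h3] at hlen
    simp at hlen

private theorem aux_exists_neword {z : CoprodI G} (hz : z ≠ 1) :
    ∃ (i j : ι) (w : CoprodI.NeWord G i j), w.prod = z := by
  classical
  have hzp : CoprodI.Word.prod (CoprodI.Word.equiv z) = z :=
    CoprodI.Word.equiv.symm_apply_apply z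
  have hne : CoprodI.Word.equiv z ≠ CoprodI.Word.empty := by
    intro h
    apply hz
    rw [← hzp, h, CoprodI.Word.prod_empty]
  obtain ⟨i, j, w, hw⟩ := CoprodI.NeWord.of_word _ hne
  exact ⟨i, j, w, by rw [CoprodI.NeWord.prod, hw, hzp]⟩

end Aux

/-- The `Bool`-indexed family consisting of `A` and `B`. -/
private def auxFam (A : Type u) (B : Type v) : Bool → Type (max u v) :=
  fun b => cond b (ULift.{v} A) (ULift.{u} B)

private instance auxFamGroup (A : Type u) (B : Type v) [Group A] [Group B] :
    ∀ b, Group (auxFam A B b)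
  | true => inferInstanceAs (Group (ULift A))
  | false => inferInstanceAs (Group (ULift B))

open Monoid in
/-- In a free product `A ∗ B`, any path in the Cayley graph with respect to the
generating set `ι_A(A) ∪ ι_B(B)` from `ι_A(a)` to `ι_B(b)`, where `a ≠ 1` and
`b ≠ 1`, must pass through the identity element.  Equivalently, removing the
identity vertex from this Cayley graph separates `ι_A(a)` from `ι_B(b)`. -/
theorem freeProduct_cayleyGraph_identity_separates
    (A B : Type*) [Group A] [Group B] (a : A) (b : B)
    (ha : a ≠ 1) (hb : b ≠ 1)
    (n : ℕ) (g : Fin (n + 1) → Coprod A B)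
    (h0 : g 0 = Coprod.inl a)
    (hn : g (Fin.last n) = Coprod.inr b)
    (hstep : ∀ i : Fin n,
      (g i.castSucc)⁻¹ * g i.succ ∈
        Set.range (Coprod.inl : A →* Coprod A B) ∪
          Set.range (Coprod.inr : B →* Coprod A B)) :
    ∃ i : Fin (n + 1), g i = 1 := by
  classical
  by_contra hno
  push_neg at hno
  -- Map into the indexed free product over `Bool`.
  set φ : Coprod A B →* CoprodI (auxFam A B) :=
    Coprod.lift
      ((CoprodI.of (i := true)).comp
        (MulEquiv.ulift.symm : A ≃* ULift A).toMonoidHom)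
      ((CoprodI.of (i := false)).comp
        (MulEquiv.ulift.symm : B ≃* ULift B).toMonoidHom) with hφ
  set ψ : CoprodI (auxFam A B) →* Coprod A B :=
    CoprodI.lift (fun b => match b with
      | true => (Coprod.inl : A →* Coprod A B).comp
          (MulEquiv.ulift : ULift A ≃* A).toMonoidHom
      | false => (Coprod.inr : B →* Coprod A B).comp
          (MulEquiv.ulift : ULift B ≃* B).toMonoidHom) with hψ
  have hψφ : ∀ z, ψ (φ z) = z := by
    have : ψ.comp φ = MonoidHom.id _ := by
      apply Coprod.hom_ext
      · ext x
        show ψ (CoprodI.of (i := true) (ULift.up x)) = Coprod.inl x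
        rw [hψ]; refine (CoprodI.lift_of _ _).trans ?_
        rfl
      · ext x
        show ψ (CoprodI.of (i := false) (ULift.up x)) = Coprod.inr x
        rw [hψ]; refine (CoprodI.lift_of _ _).trans ?_
        rfl
    intro z
    calc ψ (φ z) = (ψ.comp φ) z := rfl
    _ = z := by rw [this]; rfl
  have hφinj : Function.Injective φ := Function.LeftInverse.injective hψφ
  have hφne : ∀ i : Fin (n + 1), φ (g i) ≠ 1 := fun i h =>
    hno i (hφinj (h.trans (map_one φ).symm))
  -- Every vertex on the path has a reduced-word representative starting in `A`.
  have claim : ∀ (m : ℕ) (hm : m < n + 1),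
      ∃ (j : Bool) (w : CoprodI.NeWord (auxFam A B) true j),
        w.prod = φ (g ⟨m, hm⟩) := by
    intro m
    induction m with
    | zero =>
      intro hm
      refine ⟨true, CoprodI.NeWord.singleton (show auxFam A B true from ULift.up a) (fun h => ha (congrArg ULift.down h)), ?_⟩
      have : (⟨0, hm⟩ : Fin (n + 1)) = 0 := rfl
      rw [this, h0, CoprodI.NeWord.prod_singleton]
      simp [hφ, Coprod.lift_apply_inl]
      rfl
    | succ m ih =>
      intro hm
      have hm' : m < n := by omega
      obtain ⟨j, w, hw⟩ := ih (by omega)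
      set i : Fin n := ⟨m, hm'⟩ with hi
      have hc : i.castSucc = (⟨m, by omega⟩ : Fin (n + 1)) := rfl
      have hs : i.succ = (⟨m + 1, hm⟩ : Fin (n + 1)) := rfl
      -- the step element is `of x` for some `x` in one of the factors
      have hstep' : ∃ (k : Bool) (x : auxFam A B k),
          φ (g i.succ) = φ (g i.castSucc) * CoprodI.of x := by
        rcases hstep i with ⟨x, hx⟩ | ⟨y, hy⟩
        · refine ⟨true, ULift.up x, ?_⟩
          have : g i.succ = g i.castSucc * Coprod.inl x := by
            rw [hx, mul_inv_cancel_left]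
          rw [this, map_mul]
          simp [hφ, Coprod.lift_apply_inl]
          rfl
        · refine ⟨false, ULift.up y, ?_⟩
          have : g i.succ = g i.castSucc * Coprod.inr y := by
            rw [hy, mul_inv_cancel_left]
          rw [this, map_mul]
          simp [hφ, Coprod.lift_apply_inr]
          rfl
      obtain ⟨k, x, hkx⟩ := hstep'
      obtain ⟨i₂, j₂, w₂, hw₂⟩ := aux_exists_neword (hφne i.succ)
      have : (true : Bool) = i₂ := by
        refine aux_firstIdx_unique w w₂ x ?_
        rw [hw₂, hkx, hc, hw]
      subst this
      exact ⟨j₂, w₂, by rw [hw₂, hs]⟩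
  -- But the endpoint has a representative starting in `B`: contradiction.
  obtain ⟨j, w, hw⟩ := claim n (by omega)
  have hlast : (⟨n, by omega⟩ : Fin (n + 1)) = Fin.last n := rfl
  have hwb : w.prod = CoprodI.of (show auxFam A B false from ULift.up b) := by
    rw [hw, hlast, hn]
    simp [hφ, Coprod.lift_apply_inr]
    rfl
  have : (true : Bool) = false := by
    refine aux_firstIdx_unique w (CoprodI.NeWord.singleton
      (show auxFam A B false from ULift.up b)
      (fun h => hb (congrArg ULift.down h))) (1 : auxFam A B true) ?_
    rw [CoprodI.NeWord.prod_singleton, map_one, mul_one, hwb]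
  simp at this
end
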